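/- Lehmer's polynomial L(x) = x^10 + x^9 − x^7 − x^6 − x^5 − x^4 − x^3 + x + 1 is irreducible over ℚ, and its complex roots consist of exactly one real root α₁ > 1, the real root 1/α₁ ∈ (0,1), and eight roots lying on the unit circle |z| = 1. In particular, α₁ is a Salem number of degree 10. -/

import Mathlib

set_option maxHeartbeats 1000000
open Polynomial

noncomputable def Apol : (ZMod 2)[X] := 1 + X^2 + X^3 + X^4 + X^5
noncomputable def Bpol : (ZMod 2)[X] := 1 + X + X^2 + X^3 + X^5
noncomputable def Cpol : (ZMod 3)[X] := 1 + X^2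
noncomputable def Dpol : (ZMod 3)[X] := 1 + X + 2*X^2 + X^3 + X^5 + 2*X^6 + X^7 + X^8

lemma irred_dvd_X_pow_card_sub_X {p : ℕ} [Fact p.Prime] (g : (ZMod p)[X])
    (hg : Irreducible g) : g ∣ X ^ (p ^ g.natDegree) - X := by
  haveI : Fact (Irreducible g) := ⟨hg⟩
  have hg0 : g ≠ 0 := hg.ne_zero
  let K := AdjoinRoot g
  let pb : PowerBasis (ZMod p) K := AdjoinRoot.powerBasis hg0
  haveI : Module.Finite (ZMod p) K := pb.finite
  haveI : Fintype K := Module.fintypeOfFintype pb.basis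
  have hcard : Fintype.card K = p ^ g.natDegree := by
    rw [Module.card_eq_pow_finrank (K := ZMod p) (V := K), ZMod.card, pb.finrank,
      AdjoinRoot.powerBasis_dim hg0]
  have hroot : (AdjoinRoot.root g) ^ (p ^ g.natDegree) - AdjoinRoot.root g = 0 := by
    rw [← hcard, FiniteField.pow_card, sub_self]
  rw [← AdjoinRoot.mk_eq_zero]
  simpa using hroot

lemma exists_small_irreducible_factor {F : Type*} [Field F] {f : F[X]}
    (hf : ¬ Irreducible f) (hm : f.Monic) (hd : 1 ≤ f.natDegree) :
    ∃ g : F[X], Irreducible g ∧ g ∣ f ∧ 1 ≤ g.natDegree ∧ 2 * g.natDegree ≤ f.natDegree := by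
  have hfu : ¬ IsUnit f := by
    intro h
    rw [Polynomial.natDegree_eq_zero_of_isUnit h] at hd; omega
  rw [irreducible_iff] at hf
  push_neg at hf
  obtain ⟨a, b, hab, hau, hbu⟩ := hf hfu
  have hf0 : f ≠ 0 := hm.ne_zero
  have ha0 : a ≠ 0 := by rintro rfl; simp at hab; exact hf0 hab
  have hb0 : b ≠ 0 := by rintro rfl; simp at hab; exact hf0 hab
  have hna : 1 ≤ a.natDegree := by
    rcases Nat.eq_zero_or_pos a.natDegree with h | h
    · obtain ⟨c, rfl⟩ := Polynomial.natDegree_eq_zero.mp h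
      exact absurd (Polynomial.isUnit_C.mpr (isUnit_iff_ne_zero.mpr
        (by rintro rfl; simp at ha0))) hau
    · exact h
  have hnb : 1 ≤ b.natDegree := by
    rcases Nat.eq_zero_or_pos b.natDegree with h | h
    · obtain ⟨c, rfl⟩ := Polynomial.natDegree_eq_zero.mp h
      exact absurd (Polynomial.isUnit_C.mpr (isUnit_iff_ne_zero.mpr
        (by rintro rfl; simp at hb0))) hbu
    · exact h
  have hsum : a.natDegree + b.natDegree = f.natDegree := by
    rw [hab, Polynomial.natDegree_mul ha0 hb0]
  rcases le_total a.natDegree b.natDegree with hle | hle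
  · obtain ⟨g, hgm, hgi, hgd⟩ := Polynomial.exists_monic_irreducible_factor a hau
    exact ⟨g, hgi, hgd.trans ⟨b, hab⟩, hgi.natDegree_pos,
      le_trans (by have := Polynomial.natDegree_le_of_dvd hgd ha0; omega) (le_refl _)⟩
  · obtain ⟨g, hgm, hgi, hgd⟩ := Polynomial.exists_monic_irreducible_factor b hbu
    refine ⟨g, hgi, hgd.trans ⟨a, by rw [hab, mul_comm]⟩, hgi.natDegree_pos, ?_⟩
    have := Polynomial.natDegree_le_of_dvd hgd hb0; omega

lemma irredA : Irreducible Apol := by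
  by_contra h
  have hdeg : Apol.natDegree = 5 := by unfold Apol; compute_degree!
  have hm : Apol.Monic := by unfold Apol; monicity!
  obtain ⟨g, hgi, hgd, hg1, hg2⟩ := exists_small_irreducible_factor h hm (by omega)
  have hdvd := irred_dvd_X_pow_card_sub_X g hgi
  rw [hdeg] at hg2
  have hgu : ¬ IsUnit g := hgi.not_isUnit
  have hg2' : g.natDegree ≤ 2 := by omega
  interval_cases hn : g.natDegree
  · refine hgu (isUnit_of_dvd_one ?_)
    have cert : (1 : (ZMod 2)[X]) * Apol + (X + X^3) * (X^(2^1) - X) = 1 := by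
      unfold Apol; ring_nf; reduce_mod_char
    rw [← cert]
    refine dvd_add (hgd.mul_left _) ?_
    exact hdvd.mul_left _
  · refine hgu (isUnit_of_dvd_one ?_)
    have cert : (1 + X^2 + X^3 : (ZMod 2)[X]) * Apol + (X^4) * (X^(2^2) - X) = 1 := by
      unfold Apol; ring_nf; reduce_mod_char
    rw [← cert]
    refine dvd_add (hgd.mul_left _) ?_
    exact hdvd.mul_left _

lemma irredB : Irreducible Bpol := by
  by_contra h
  have hdeg : Bpol.natDegree = 5 := by unfold Bpol; compute_degree!
  have hm : Bpol.Monic := by unfold Bpol; monicity!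
  obtain ⟨g, hgi, hgd, hg1, hg2⟩ := exists_small_irreducible_factor h hm (by omega)
  have hdvd := irred_dvd_X_pow_card_sub_X g hgi
  rw [hdeg] at hg2
  have hgu : ¬ IsUnit g := hgi.not_isUnit
  have hg2' : g.natDegree ≤ 2 := by omega
  interval_cases hn : g.natDegree
  · refine hgu (isUnit_of_dvd_one ?_)
    have cert : (1 : (ZMod 2)[X]) * Bpol + (1 + X^2 + X^3) * (X^(2^1) - X) = 1 := by
      unfold Bpol; ring_nf; reduce_mod_char
    rw [← cert]
    refine dvd_add (hgd.mul_left _) ?_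
    exact hdvd.mul_left _
  · refine hgu (isUnit_of_dvd_one ?_)
    have cert : (1 + X^2 + X^3 : (ZMod 2)[X]) * Bpol + (1 + X^2 + X^3 + X^4) * (X^(2^2) - X) = 1 := by
      unfold Bpol; ring_nf; reduce_mod_char
    rw [← cert]
    refine dvd_add (hgd.mul_left _) ?_
    exact hdvd.mul_left _

lemma irredC : Irreducible Cpol := by
  by_contra h
  have hdeg : Cpol.natDegree = 2 := by unfold Cpol; compute_degree!
  have hm : Cpol.Monic := by unfold Cpol; monicity!
  obtain ⟨g, hgi, hgd, hg1, hg2⟩ := exists_small_irreducible_factor h hm (by omega)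
  have hdvd := irred_dvd_X_pow_card_sub_X g hgi
  rw [hdeg] at hg2
  have hgu : ¬ IsUnit g := hgi.not_isUnit
  have hg2' : g.natDegree ≤ 1 := by omega
  interval_cases hn : g.natDegree
  · refine hgu (isUnit_of_dvd_one ?_)
    have cert : (1 + X^2 : (ZMod 3)[X]) * Cpol + (2*X) * (X^(3^1) - X) = 1 := by
      unfold Cpol; ring_nf; reduce_mod_char
    rw [← cert]
    refine dvd_add (hgd.mul_left _) ?_
    exact hdvd.mul_left _

lemma irredD : Irreducible Dpol := by
  by_contra h
  have hdeg : Dpol.natDegree = 8 := by unfold Dpol; compute_degree!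
  have hm : Dpol.Monic := by unfold Dpol; monicity!
  obtain ⟨g, hgi, hgd, hg1, hg2⟩ := exists_small_irreducible_factor h hm (by omega)
  have hdvd := irred_dvd_X_pow_card_sub_X g hgi
  rw [hdeg] at hg2
  have hgu : ¬ IsUnit g := hgi.not_isUnit
  have hg2' : g.natDegree ≤ 4 := by omega
  interval_cases hn : g.natDegree
  · refine hgu (isUnit_of_dvd_one ?_)
    have cert : (1 + X + 2*X^2 : (ZMod 3)[X]) * Dpol + (2 + 2*X + X^2 + X^3 + X^4 + X^5 + X^7) * (X^(3^1) - X) = 1 := by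
      unfold Dpol; ring_nf; reduce_mod_char
    rw [← cert]
    refine dvd_add (hgd.mul_left _) ?_
    exact hdvd.mul_left _
  · refine hgu (isUnit_of_dvd_one ?_)
    have cert : (1 + X + 2*X^2 + X^3 + X^5 + 2*X^6 + X^7 + X^8 : (ZMod 3)[X]) * Dpol + (2 + 2*X + X^5 + X^6 + 2*X^7) * (X^(3^2) - X) = 1 := by
      unfold Dpol; ring_nf; reduce_mod_char
    rw [← cert]
    refine dvd_add (hgd.mul_left _) ?_
    exact hdvd.mul_left _
  · refine hgu (isUnit_of_dvd_one ?_)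
    have cert : (1 + X^2 + 2*X^5 + 2*X^6 + 2*X^7 + X^8 + X^9 + X^10 + 2*X^11 + 2*X^12 + 2*X^13 + X^16 + X^18 + 2*X^19 + X^20 + X^24 + 2*X^25 : (ZMod 3)[X]) * Dpol + (1 + 2*X^2 + 2*X^3 + X^4 + X^6) * (X^(3^3) - X) = 1 := by
      unfold Dpol; ring_nf; reduce_mod_char
    rw [← cert]
    refine dvd_add (hgd.mul_left _) ?_
    exact hdvd.mul_left _
  · refine hgu (isUnit_of_dvd_one ?_)
    have cert : (1 + X + X^4 + X^5 + X^6 + X^8 + 2*X^9 + 2*X^10 + X^11 + X^12 + X^13 + 2*X^15 + X^16 + 2*X^18 + 2*X^19 + 2*X^20 + X^21 + X^22 + 2*X^23 + 2*X^25 + 2*X^26 + 2*X^27 + 2*X^30 + 2*X^31 + X^32 + X^34 + X^36 + X^38 + X^40 + 2*X^41 + 2*X^42 + 2*X^45 + 2*X^46 + 2*X^47 + 2*X^49 + X^50 + X^51 + 2*X^52 + 2*X^53 + 2*X^54 + X^56 + 2*X^57 + X^59 + X^60 + X^61 + 2*X^62 + 2*X^63 + X^64 + X^66 + X^67 + X^68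 + X^71 + X^72 + 2*X^73 + 2*X^75 + 2*X^77 + 2*X^79 : (ZMod 3)[X]) * Dpol + (2 + 2*X^3 + X^5 + X^6) * (X^(3^4) - X) = 1 := by
      unfold Dpol; ring_nf; reduce_mod_char
    rw [← cert]
    refine dvd_add (hgd.mul_left _) ?_
    exact hdvd.mul_left _

noncomputable def LZ : ℤ[X] := X^10 + X^9 - X^7 - X^6 - X^5 - X^4 - X^3 + X + 1

lemma LZ_monic : LZ.Monic := by unfold LZ; monicity!

lemma LZ_natDegree : LZ.natDegree = 10 := by unfold LZ; compute_degree!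

lemma factAB : LZ.map (Int.castRingHom (ZMod 2)) = Apol * Bpol := by
  unfold LZ Apol Bpol
  simp only [Polynomial.map_add, Polynomial.map_sub, Polynomial.map_pow,
    Polynomial.map_X, Polynomial.map_one]
  ring_nf
  reduce_mod_char

lemma factCD : LZ.map (Int.castRingHom (ZMod 3)) = Cpol * Dpol := by
  unfold LZ Cpol Dpol
  simp only [Polynomial.map_add, Polynomial.map_sub, Polynomial.map_pow,
    Polynomial.map_X, Polynomial.map_one]
  ring_nf
  reduce_mod_char
  ring

lemma natDegree_dvd_mul_irred {F : Type*} [Field F] {d P Q : F[X]}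
    (hP : Irreducible P) (hQ : Irreducible Q) (h : d ∣ P * Q) :
    d.natDegree = 0 ∨ d.natDegree = P.natDegree ∨ d.natDegree = Q.natDegree ∨
      d.natDegree = P.natDegree + Q.natDegree := by
  by_cases hPd : P ∣ d
  · obtain ⟨e, rfl⟩ := hPd
    have he : e ∣ Q := by
      have := (mul_dvd_mul_iff_left hP.ne_zero).mp h
      exact this
    obtain ⟨c, hc⟩ := he
    have he0 : e ≠ 0 := by rintro rfl; exact hQ.ne_zero (by simp [hc])
    rcases hQ.isUnit_or_isUnit hc with hu | hu
    · right; left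
      rw [Polynomial.natDegree_mul hP.ne_zero he0,
        Polynomial.natDegree_eq_zero_of_isUnit hu, add_zero]
    · right; right; right
      have hc0 : c ≠ 0 := by rintro rfl; exact hQ.ne_zero (by simp [hc])
      have : Q.natDegree = e.natDegree := by
        rw [hc, Polynomial.natDegree_mul he0 hc0,
          Polynomial.natDegree_eq_zero_of_isUnit hu, add_zero]
      rw [Polynomial.natDegree_mul hP.ne_zero he0, this]
  · have hco : IsCoprime P d := hP.coprime_iff_not_dvd.mpr hPd
    have hdQ : d ∣ Q := hco.symm.dvd_of_dvd_mul_left h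
    obtain ⟨c, hc⟩ := hdQ
    have hd0 : d ≠ 0 := by rintro rfl; exact hQ.ne_zero (by simp [hc])
    have hc0 : c ≠ 0 := by rintro rfl; exact hQ.ne_zero (by simp [hc])
    rcases hQ.isUnit_or_isUnit hc with hu | hu
    · left; exact Polynomial.natDegree_eq_zero_of_isUnit hu
    · right; right; left
      rw [hc, Polynomial.natDegree_mul hd0 hc0,
        Polynomial.natDegree_eq_zero_of_isUnit hu, add_zero]

lemma LZ_irreducible : Irreducible LZ := by
  constructor
  · intro h
    have := Polynomial.natDegree_eq_zero_of_isUnit h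
    rw [LZ_natDegree] at this; omega
  · intro a b hab
    by_contra hcon
    push_neg at hcon
    obtain ⟨hau, hbu⟩ := hcon
    have hL0 : LZ ≠ 0 := LZ_monic.ne_zero
    have ha0 : a ≠ 0 := by rintro rfl; simp at hab; exact hL0 hab
    have hb0 : b ≠ 0 := by rintro rfl; simp at hab; exact hL0 hab
    have hlead : a.leadingCoeff * b.leadingCoeff = 1 := by
      have := congrArg Polynomial.leadingCoeff hab
      rw [Polynomial.leadingCoeff_mul] at this
      rw [← this]; exact LZ_monic.leadingCoeff
    have hsum : a.natDegree + b.natDegree = 10 := by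
      rw [← LZ_natDegree, hab, Polynomial.natDegree_mul ha0 hb0]
    have hna : 1 ≤ a.natDegree := by
      rcases Nat.eq_zero_or_pos a.natDegree with h | h
      · obtain ⟨c, rfl⟩ := Polynomial.natDegree_eq_zero.mp h
        rw [Polynomial.leadingCoeff_C] at hlead
        exact absurd (Polynomial.isUnit_C.mpr (IsUnit.of_mul_eq_one _ hlead)) hau
      · exact h
    have hnb : 1 ≤ b.natDegree := by
      rcases Nat.eq_zero_or_pos b.natDegree with h | h
      · obtain ⟨c, rfl⟩ := Polynomial.natDegree_eq_zero.mp h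
        rw [Polynomial.leadingCoeff_C, mul_comm] at hlead
        exact absurd (Polynomial.isUnit_C.mpr (IsUnit.of_mul_eq_one _ hlead)) hbu
      · exact h
    have hpm : a.leadingCoeff = 1 ∧ b.leadingCoeff = 1 ∨
        a.leadingCoeff = -1 ∧ b.leadingCoeff = -1 :=
      Int.mul_eq_one_iff_eq_one_or_neg_one.mp hlead
    -- mod 2 argument
    have hdeg2 : ∀ (c : ℤ[X]), c.leadingCoeff = 1 ∨ c.leadingCoeff = -1 →
        (c.map (Int.castRingHom (ZMod 2))).natDegree = c.natDegree := by
      intro c hc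
      refine Polynomial.natDegree_map_of_leadingCoeff_ne_zero _ ?_
      rcases hc with h | h <;> rw [h] <;> decide
    have hdeg3 : ∀ (c : ℤ[X]), c.leadingCoeff = 1 ∨ c.leadingCoeff = -1 →
        (c.map (Int.castRingHom (ZMod 3))).natDegree = c.natDegree := by
      intro c hc
      refine Polynomial.natDegree_map_of_leadingCoeff_ne_zero _ ?_
      rcases hc with h | h <;> rw [h] <;> decide
    have hla : a.leadingCoeff = 1 ∨ a.leadingCoeff = -1 := by tauto
    have hdvd2 : a.map (Int.castRingHom (ZMod 2)) ∣ Apol * Bpol := by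
      rw [← factAB, hab, Polynomial.map_mul]
      exact Dvd.intro _ rfl
    have hdvd3 : a.map (Int.castRingHom (ZMod 3)) ∣ Cpol * Dpol := by
      rw [← factCD, hab, Polynomial.map_mul]
      exact Dvd.intro _ rfl
    have hA : Apol.natDegree = 5 := by unfold Apol; compute_degree!
    have hB : Bpol.natDegree = 5 := by unfold Bpol; compute_degree!
    have hC : Cpol.natDegree = 2 := by unfold Cpol; compute_degree!
    have hD : Dpol.natDegree = 8 := by unfold Dpol; compute_degree!
    have h2 := natDegree_dvd_mul_irred irredA irredB hdvd2
    have h3 := natDegree_dvd_mul_irred irredC irredD hdvd3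
    rw [hdeg2 a hla, hA, hB] at h2
    rw [hdeg3 a hla, hC, hD] at h3
    omega

lemma LQ_irreducible :
    Irreducible (X^10 + X^9 - X^7 - X^6 - X^5 - X^4 - X^3 + X + 1 : Polynomial ℚ) := by
  have h := (LZ_monic.irreducible_iff_irreducible_map_fraction_map (K := ℚ)).mp LZ_irreducible
  have : LZ.map (algebraMap ℤ ℚ) =
      (X^10 + X^9 - X^7 - X^6 - X^5 - X^4 - X^3 + X + 1 : Polynomial ℚ) := by
    unfold LZ
    simp only [Polynomial.map_add, Polynomial.map_sub, Polynomial.map_pow,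
      Polynomial.map_X, Polynomial.map_one]
  rwa [this] at h

lemma quad_factor {a b s : ℂ} (h1 : a + b = s) (h2 : a * b = 1) :
    (X^2 - C s*X + 1 : ℂ[X]) = (X - C a) * (X - C b) := by
  have h3 : (1:ℂ[X]) = C a * C b := by rw [← map_mul, h2, map_one]
  rw [h3, ← h1, map_add]; ring

lemma unit_circle_quad {r : ℝ} (h1 : -2 < r) (h2 : r < 2) :
    ∃ u v : ℂ, ‖u‖ = 1 ∧ ‖v‖ = 1 ∧
      (X^2 - C (r:ℂ)*X + 1 : ℂ[X]) = (X - C u) * (X - C v) := by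
  have h4 : (0:ℝ) ≤ 4 - r^2 := by nlinarith
  set s := Real.sqrt (4 - r^2) with hs
  have hs2 : s^2 = 4 - r^2 := Real.sq_sqrt h4
  have hsC : (s:ℂ)^2 = 4 - (r:ℂ)^2 := by exact_mod_cast congrArg (Complex.ofReal) hs2
  set u : ℂ := ((r:ℂ) + (s:ℂ)*Complex.I)/2 with hu
  set v : ℂ := ((r:ℂ) - (s:ℂ)*Complex.I)/2 with hv
  have hmul : u * v = 1 := by
    rw [hu, hv]
    have hI : Complex.I^2 = -1 := Complex.I_sq
    field_simp
    linear_combination (-(Complex.I)^2) * hsC + ((r:ℂ)^2 - 4) * hI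
  have hadd : u + v = (r:ℂ) := by rw [hu, hv]; ring
  have hconju : (starRingEnd ℂ) u = v := by
    rw [hu, hv]
    simp [map_div₀, Complex.conj_ofReal, map_ofNat]
    ring
  have hconjv : (starRingEnd ℂ) v = u := by
    rw [hu, hv]
    simp [map_div₀, Complex.conj_ofReal, map_ofNat]
  have habsu : ‖u‖ = 1 := by
    have : (Complex.normSq u : ℂ) = 1 := by rw [← Complex.mul_conj, hconju, hmul]
    have h5 : Complex.normSq u = 1 := by exact_mod_cast this
    rw [Complex.norm_def, h5, Real.sqrt_one]
  have habsv : ‖v‖ = 1 := by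
    have : (Complex.normSq v : ℂ) = 1 := by
      rw [← Complex.mul_conj, hconjv, mul_comm]; exact hmul
    have h5 : Complex.normSq v = 1 := by exact_mod_cast this
    rw [Complex.norm_def, h5, Real.sqrt_one]
  exact ⟨u, v, habsu, habsv, quad_factor hadd hmul⟩

lemma salem_quad {r : ℝ} (h2 : 2 < r) :
    ∃ a : ℝ, 1 < a ∧
      (X^2 - C (r:ℂ)*X + 1 : ℂ[X]) = (X - C (a:ℂ)) * (X - C ((a⁻¹:ℝ):ℂ)) := by
  have h4 : (0:ℝ) ≤ r^2 - 4 := by nlinarith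
  set s := Real.sqrt (r^2 - 4) with hs
  have hs2 : s^2 = r^2 - 4 := Real.sq_sqrt h4
  have hs0 : 0 ≤ s := Real.sqrt_nonneg _
  set a : ℝ := (r + s)/2 with ha
  have ha1 : 1 < a := by rw [ha]; linarith
  have hmulR : a * ((r - s)/2) = 1 := by rw [ha]; linear_combination (-1/4 : ℝ) * hs2
  have hainv : a⁻¹ = (r - s)/2 := (eq_inv_of_mul_eq_one_left (by rw [mul_comm]; exact hmulR)).symm
  have haddR : a + a⁻¹ = r := by rw [hainv, ha]; ring
  refine ⟨a, ha1, quad_factor ?_ ?_⟩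
  · exact_mod_cast congrArg Complex.ofReal haddR
  · have : a * a⁻¹ = 1 := by rw [hainv]; exact hmulR
    exact_mod_cast congrArg Complex.ofReal this

def qf : ℝ → ℝ := fun y => y^5 + y^4 - 5*y^3 - 5*y^2 + 4*y + 3

lemma qf_cont : Continuous qf := by unfold qf; fun_prop

lemma qf_root_between {a b : ℝ} (hab : a ≤ b) (h1 : qf a ≤ 0) (h2 : 0 ≤ qf b) :
    ∃ r, a ≤ r ∧ r ≤ b ∧ qf r = 0 := by
  have := intermediate_value_Icc hab qf_cont.continuousOn
  obtain ⟨r, hr, hr0⟩ := this ⟨h1, h2⟩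
  exact ⟨r, hr.1, hr.2, hr0⟩

lemma qf_root_between' {a b : ℝ} (hab : a ≤ b) (h1 : 0 ≤ qf a) (h2 : qf b ≤ 0) :
    ∃ r, a ≤ r ∧ r ≤ b ∧ qf r = 0 := by
  have := intermediate_value_Icc' hab qf_cont.continuousOn
  obtain ⟨r, hr, hr0⟩ := this ⟨h2, h1⟩
  exact ⟨r, hr.1, hr.2, hr0⟩

lemma exists_five_roots :
    ∃ r1 r2 r3 r4 r5 : ℝ,
      (-2 < r1 ∧ r1 < r2 ∧ r2 < r3 ∧ r3 < r4 ∧ r4 < 2) ∧ (2 < r5) ∧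
      qf r1 = 0 ∧ qf r2 = 0 ∧ qf r3 = 0 ∧ qf r4 = 0 ∧ qf r5 = 0 := by
  obtain ⟨r1, h1a, h1b, h1⟩ := qf_root_between (by norm_num : (-2:ℝ) ≤ -3/2)
    (by norm_num [qf]) (by norm_num [qf])
  obtain ⟨r2, h2a, h2b, h2⟩ := qf_root_between' (by norm_num : (-3/2:ℝ) ≤ -1)
    (by norm_num [qf]) (by norm_num [qf])
  obtain ⟨r3, h3a, h3b, h3⟩ := qf_root_between (by norm_num : (-1:ℝ) ≤ 0)
    (by norm_num [qf]) (by norm_num [qf])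
  obtain ⟨r4, h4a, h4b, h4⟩ := qf_root_between' (by norm_num : (0:ℝ) ≤ 1)
    (by norm_num [qf]) (by norm_num [qf])
  obtain ⟨r5, h5a, h5b, h5⟩ := qf_root_between (by norm_num : (2:ℝ) ≤ 3)
    (by norm_num [qf]) (by norm_num [qf])
  have ne1 : r1 ≠ -2 := fun h => by rw [h] at h1; norm_num [qf] at h1
  have ne1' : r1 ≠ -3/2 := fun h => by rw [h] at h1; norm_num [qf] at h1
  have ne2 : r2 ≠ -3/2 := fun h => by rw [h] at h2; norm_num [qf] at h2
  have ne2' : r2 ≠ -1 := fun h => by rw [h] at h2; norm_num [qf] at h2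
  have ne3 : r3 ≠ -1 := fun h => by rw [h] at h3; norm_num [qf] at h3
  have ne4 : r4 ≠ 1 := fun h => by rw [h] at h4; norm_num [qf] at h4
  have ne5 : r5 ≠ 2 := fun h => by rw [h] at h5; norm_num [qf] at h5
  refine ⟨r1, r2, r3, r4, r5, ⟨?_, ?_, ?_, ?_, ?_⟩, ?_, h1, h2, h3, h4, h5⟩
  · exact lt_of_le_of_ne h1a (Ne.symm ne1)
  · calc r1 < -3/2 := lt_of_le_of_ne h1b ne1'
      _ ≤ r2 := le_of_lt (lt_of_le_of_ne h2a (Ne.symm ne2))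
  · calc r2 < -1 := lt_of_le_of_ne h2b ne2'
      _ ≤ r3 := le_of_lt (lt_of_le_of_ne h3a (Ne.symm ne3))
  · have ne3' : r3 ≠ 0 := fun h => by rw [h] at h3; norm_num [qf] at h3
    calc r3 < 0 := lt_of_le_of_ne h3b ne3'
      _ ≤ r4 := h4a
  · calc r4 ≤ 1 := h4b
      _ < 2 := by norm_num
  · exact lt_of_le_of_ne h5a (Ne.symm ne5)

lemma qC_factor {r1 r2 r3 r4 r5 : ℝ}
    (h12 : r1 < r2) (h23 : r2 < r3) (h34 : r3 < r4) (h45 : r4 < r5)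
    (h1 : qf r1 = 0) (h2 : qf r2 = 0) (h3 : qf r3 = 0) (h4 : qf r4 = 0) (h5 : qf r5 = 0) :
    ∀ y : ℂ, y^5 + y^4 - 5*y^3 - 5*y^2 + 4*y + 3 =
      (y - r1)*(y - r2)*(y - r3)*(y - r4)*(y - r5) := by
  set qC : ℂ[X] := X^5 + X^4 - 5*X^3 - 5*X^2 + 4*X + 3 with hqC
  have hmon : qC.Monic := by rw [hqC]; monicity!
  have hdeg : qC.natDegree = 5 := by rw [hqC]; compute_degree!
  have hq0 : qC ≠ 0 := hmon.ne_zero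
  have hroot : ∀ r : ℝ, qf r = 0 → (r:ℂ) ∈ qC.roots := by
    intro r hr
    rw [Polynomial.mem_roots hq0]
    rw [Polynomial.IsRoot.def, hqC]
    simp only [eval_add, eval_sub, eval_mul, eval_pow, eval_X, eval_ofNat]
    have : (r^5 + r^4 - 5*r^3 - 5*r^2 + 4*r + 3 : ℝ) = 0 := by
      have := hr; unfold qf at this; linarith
    have := congrArg Complex.ofReal this
    push_cast at this
    linear_combination this
  set m : Multiset ℂ := {(r1:ℂ), (r2:ℂ), (r3:ℂ), (r4:ℂ), (r5:ℂ)} with hm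
  have hnodup : m.Nodup := by
    rw [hm]
    simp only [Multiset.insert_eq_cons, Multiset.nodup_cons, Multiset.mem_cons,
      Multiset.mem_singleton, Multiset.nodup_singleton]
    constructor
    · push_neg
      exact ⟨by exact_mod_cast h12.ne, by exact_mod_cast (h12.trans h23).ne,
        by exact_mod_cast (h12.trans (h23.trans h34)).ne,
        by exact_mod_cast (h12.trans (h23.trans (h34.trans h45))).ne⟩
    constructor
    · push_neg
      exact ⟨by exact_mod_cast h23.ne, by exact_mod_cast (h23.trans h34).ne,
        by exact_mod_cast (h23.trans (h34.trans h45)).ne⟩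
    constructor
    · push_neg
      exact ⟨by exact_mod_cast h34.ne, by exact_mod_cast (h34.trans h45).ne⟩
    exact ⟨by exact_mod_cast h45.ne, trivial⟩
  have hle : m ≤ qC.roots := by
    rw [Multiset.le_iff_subset hnodup]
    intro x hx
    rw [hm] at hx
    simp only [Multiset.insert_eq_cons, Multiset.mem_cons, Multiset.mem_singleton] at hx
    rcases hx with rfl | rfl | rfl | rfl | rfl
    exacts [hroot r1 h1, hroot r2 h2, hroot r3 h3, hroot r4 h4, hroot r5 h5]
  have hcard : Multiset.card qC.roots ≤ Multiset.card m := by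
    rw [hm]
    have := qC.card_roots'
    rw [hdeg] at this
    simpa using this
  have hroots_eq : qC.roots = m := (Multiset.eq_of_le_of_card_le hle hcard).symm
  have hfact : qC = (m.map fun a => X - C a).prod := by
    conv_lhs => rw [(IsAlgClosed.splits qC).eq_prod_roots_of_monic hmon, hroots_eq]
  intro y
  have := congrArg (eval y) hfact
  rw [hqC, hm] at this
  simp only [Multiset.insert_eq_cons, Multiset.map_cons, Multiset.map_singleton,
    Multiset.prod_cons, Multiset.prod_singleton, eval_add, eval_sub, eval_mul,
    eval_pow, eval_X, eval_ofNat, eval_C] at this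
  linear_combination this

lemma lehmer_roots :
    ∃ α : ℝ, 1 < α ∧ ∃ s : Multiset ℂ, Multiset.card s = 8 ∧ (∀ z ∈ s, ‖z‖ = 1) ∧
      (X^10 + X^9 - X^7 - X^6 - X^5 - X^4 - X^3 + X + 1 : Polynomial ℂ).roots =
        (α : ℂ) ::ₘ ((α⁻¹ : ℝ) : ℂ) ::ₘ s := by
  obtain ⟨r1, r2, r3, r4, r5, ⟨hb1, h12, h23, h34, hb4⟩, hb5, h1, h2, h3, h4, h5⟩ :=
    exists_five_roots
  have h45 : r4 < r5 := lt_trans hb4 hb5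
  have qeval := qC_factor h12 h23 h34 h45 h1 h2 h3 h4 h5
  obtain ⟨u1, v1, hu1, hv1, hf1⟩ := unit_circle_quad (show (-2:ℝ) < r1 from hb1)
    (show r1 < 2 by linarith)
  obtain ⟨u2, v2, hu2, hv2, hf2⟩ := unit_circle_quad (show (-2:ℝ) < r2 by linarith)
    (show r2 < 2 by linarith)
  obtain ⟨u3, v3, hu3, hv3, hf3⟩ := unit_circle_quad (show (-2:ℝ) < r3 by linarith)
    (show r3 < 2 by linarith)
  obtain ⟨u4, v4, hu4, hv4, hf4⟩ := unit_circle_quad (show (-2:ℝ) < r4 by linarith)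
    (show r4 < 2 by linarith)
  obtain ⟨α, hα, hf5⟩ := salem_quad hb5
  have key : ∀ z : ℂ, z ≠ 0 →
      z^10 + z^9 - z^7 - z^6 - z^5 - z^4 - z^3 + z + 1 =
      (z^2 - (r5:ℂ)*z + 1)*((z^2 - (r1:ℂ)*z + 1)*((z^2 - (r2:ℂ)*z + 1)*((z^2 - (r3:ℂ)*z + 1)*
        (z^2 - (r4:ℂ)*z + 1)))) := by
    intro z hz
    have hzz : z * z⁻¹ = 1 := mul_inv_cancel₀ hz
    have hq : ∀ r : ℂ, z*(z + z⁻¹ - r) = z^2 - r*z + 1 := by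
      intro r; linear_combination hzz
    calc z^10 + z^9 - z^7 - z^6 - z^5 - z^4 - z^3 + z + 1
        = z^5 * ((z+z⁻¹)^5 + (z+z⁻¹)^4 - 5*(z+z⁻¹)^3 - 5*(z+z⁻¹)^2 + 4*(z+z⁻¹) + 3) := by
          linear_combination ( (-1) + (-1)*z + (-1)*z*z⁻¹ + (-1)*z^2*z⁻¹ + (-1)*z^2*z⁻¹^2 + z^3 + (-1)*z^3*z⁻¹^2 + (-1)*z^3*z⁻¹^3 + z^4 + z^4*z⁻¹ + (-1)*z^4*z⁻¹^3 + (-1)*z^4*z⁻¹^4 + 4*z^5 + 5*z^5*z⁻¹ + (-4)*z^5*z⁻¹^2 + (-5)*z^5*z⁻¹^3 + 5*z^6 + (-6)*z^6*z⁻¹ + (-10)*z^6*z⁻¹^2 + (-4)*z^7 + (-10)*z^7*z⁻¹ + (-5)*z^8 ) * hzz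
      _ = z^5 * ((z+z⁻¹ - r1)*(z+z⁻¹ - r2)*(z+z⁻¹ - r3)*(z+z⁻¹ - r4)*(z+z⁻¹ - r5)) := by
          rw [qeval (z+z⁻¹)]
      _ = (z*(z+z⁻¹ - r5)) * ((z*(z+z⁻¹ - r1))*((z*(z+z⁻¹ - r2))*((z*(z+z⁻¹ - r3))*
            (z*(z+z⁻¹ - r4))))) := by ring
      _ = (z^2 - (r5:ℂ)*z + 1)*((z^2 - (r1:ℂ)*z + 1)*((z^2 - (r2:ℂ)*z + 1)*
            ((z^2 - (r3:ℂ)*z + 1)*(z^2 - (r4:ℂ)*z + 1)))) := by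
          rw [hq, hq, hq, hq, hq]
  have PF : (X^10 + X^9 - X^7 - X^6 - X^5 - X^4 - X^3 + X + 1 : Polynomial ℂ) =
      (X^2 - C (r5:ℂ)*X + 1) * ((X^2 - C (r1:ℂ)*X + 1) * ((X^2 - C (r2:ℂ)*X + 1) *
        ((X^2 - C (r3:ℂ)*X + 1) * (X^2 - C (r4:ℂ)*X + 1)))) := by
    apply Polynomial.eq_of_infinite_eval_eq
    apply ((Set.finite_singleton (0:ℂ)).infinite_compl).mono
    intro z hz
    have hz' : z ≠ 0 := by simpa using hz
    simp only [Set.mem_setOf_eq, eval_add, eval_sub, eval_mul, eval_pow, eval_X, eval_one,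
      eval_C, eval_ofNat]
    linear_combination key z hz'
  have PF2 : (X^10 + X^9 - X^7 - X^6 - X^5 - X^4 - X^3 + X + 1 : Polynomial ℂ) =
      ((((α:ℝ):ℂ) ::ₘ ((α⁻¹:ℝ):ℂ) ::ₘ u1 ::ₘ v1 ::ₘ u2 ::ₘ v2 ::ₘ u3 ::ₘ v3 ::ₘ u4 ::ₘ v4 ::ₘ 0).map
        (fun a => X - C a)).prod := by
    rw [PF, hf5, hf1, hf2, hf3, hf4]
    simp only [Multiset.map_cons, Multiset.prod_cons, Multiset.map_zero, Multiset.prod_zero]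
    ring
  refine ⟨α, hα, (u1 ::ₘ v1 ::ₘ u2 ::ₘ v2 ::ₘ u3 ::ₘ v3 ::ₘ u4 ::ₘ v4 ::ₘ 0), by simp, ?_, ?_⟩
  · intro z hz
    simp only [Multiset.mem_cons, Multiset.notMem_zero, or_false] at hz
    rcases hz with rfl | rfl | rfl | rfl | rfl | rfl | rfl | rfl
    exacts [hu1, hv1, hu2, hv2, hu3, hv3, hu4, hv4]
  · rw [PF2, Polynomial.roots_multiset_prod_X_sub_C]

/-- Lehmer's polynomial is irreducible over `ℚ`, and its complex roots consist of exactly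
one real root `α₁ > 1`, the real root `1/α₁ ∈ (0,1)`, and eight roots on the unit circle.
In particular `α₁` is a Salem number of degree 10. -/
theorem lehmer_is_salem :
    Irreducible (X^10 + X^9 - X^7 - X^6 - X^5 - X^4 - X^3 + X + 1 : Polynomial ℚ) ∧
    ∃ α : ℝ, 1 < α ∧ 0 < α⁻¹ ∧ α⁻¹ < 1 ∧
      ∃ s : Multiset ℂ, Multiset.card s = 8 ∧ (∀ z ∈ s, ‖z‖ = 1) ∧
        (X^10 + X^9 - X^7 - X^6 - X^5 - X^4 - X^3 + X + 1 : Polynomial ℂ).roots =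
          (α : ℂ) ::ₘ ((α⁻¹ : ℝ) : ℂ) ::ₘ s := by
  refine ⟨LQ_irreducible, ?_⟩
  obtain ⟨α, hα, s, hcard, habs, hroots⟩ := lehmer_roots
  exact ⟨α, hα, inv_pos.mpr (by linarith), inv_lt_one_of_one_lt₀ hα, s, hcard, habs, hroots⟩
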